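/- Fourier slice theorem: For every Schwartz function f on ℝ², every unit vector ω ∈ S¹ and every q ∈ ℝ, the one-dimensional Fourier transform in the affine parameter p of the Radon transform of f satisfies ∫_ℝ e^{−i q p} ℛf(ω,p) dp = 𝓕f(qω). -/

import Mathlib

open MeasureTheory Real intervalIntegral
open scoped RealInnerProductSpace

noncomputable section

/-- The plane `ℝ²` as a Euclidean space. -/
abbrev E2 : Type := EuclideanSpace ℝ (Fin 2)

/-- The unit vector `ω(φ) = (cos φ, sin φ)`. -/
def omega (φ : ℝ) : E2 := (WithLp.equiv 2 (Fin 2 → ℝ)).symm ![Real.cos φ, Real.sin φ]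

/-- The rotation of `w` by `π/2`: `w^⊥ = (−w₂, w₁)`. -/
def perp (w : E2) : E2 := (WithLp.equiv 2 (Fin 2 → ℝ)).symm ![-(w 1), w 0]

/-- The Fourier transform on `ℝ²`: `𝓕f(ξ) = ∫ e^{−i x·ξ} f(x) dx`. -/
def FT (f : E2 → ℂ) (ξ : E2) : ℂ :=
  ∫ x : E2, Complex.exp (-(Complex.I * (⟪x, ξ⟫ : ℂ))) * f x

/-- The Radon transform `ℛf(ω,p) = ∫ f(p ω + t ω^⊥) dt`. -/
def Radon (f : E2 → ℂ) (w : E2) (p : ℝ) : ℂ :=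
  ∫ t : ℝ, f (p • w + t • perp w)

/-- Fourier slice theorem: the 1D Fourier transform in `p` of `ℛf(ω,·)`
is `𝓕f(qω)`. -/
theorem fourier_slice (f : SchwartzMap E2 ℂ) (w : E2) (hw : ‖w‖ = 1) (q : ℝ) :
    ∫ p : ℝ, Complex.exp (-(Complex.I * q * p)) * Radon (⇑f) w p = FT (⇑f) (q • w) := by
  -- basic inner product computations
  have hww : ⟪w, w⟫ = 1 := by
    rw [real_inner_self_eq_norm_sq, hw]; norm_num
  have hpw : ⟪perp w, w⟫ = 0 := by
    simp only [perp, PiLp.inner_apply, RCLike.inner_apply, conj_trivial,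
      WithLp.equiv_symm_apply, WithLp.ofLp_toLp, Fin.sum_univ_two, Matrix.cons_val_zero,
      Matrix.cons_val_one, Matrix.head_cons]
    ring
  have hpp : ⟪perp w, perp w⟫ = 1 := by
    have : ⟪perp w, perp w⟫ = ⟪w, w⟫ := by
      simp only [perp, PiLp.inner_apply, RCLike.inner_apply, conj_trivial,
        WithLp.equiv_symm_apply, WithLp.ofLp_toLp, Fin.sum_univ_two, Matrix.cons_val_zero,
        Matrix.cons_val_one, Matrix.head_cons]
      ring
    rw [this, hww]
  -- orthonormal basis {w, perp w}
  set v : Fin 2 → E2 := ![w, perp w] with hv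
  have hortho : Orthonormal ℝ v := by
    rw [orthonormal_iff_ite]
    intro i j
    fin_cases i <;> fin_cases j <;>
      simp [v, hww, hpw, hpp, real_inner_comm (perp w) w, hw,
        (by rw [norm_eq_sqrt_real_inner, hpp, Real.sqrt_one] : ‖perp w‖ = 1)]
  have hcard : Fintype.card (Fin 2) = Module.finrank ℝ E2 := by
    simp [finrank_euclideanSpace_fin]
  let B : Module.Basis (Fin 2) ℝ E2 :=
    basisOfLinearIndependentOfCardEqFinrank hortho.linearIndependent hcard
  have hB : ⇑B = v := coe_basisOfLinearIndependentOfCardEqFinrank _ _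
  let b : OrthonormalBasis (Fin 2) ℝ E2 := B.toOrthonormalBasis (hB ▸ hortho)
  have hb : ⇑b = v := by
    rw [B.coe_toOrthonormalBasis, hB]
  -- the measure preserving coordinates map ℝ × ℝ → E2
  let Φ : ℝ × ℝ ≃ᵐ E2 :=
    (MeasurableEquiv.finTwoArrow.symm.trans
      (MeasurableEquiv.toLp 2 (Fin 2 → ℝ))).trans b.measurableEquiv.symm
  have hΦ : MeasurePreserving Φ volume volume := by
    have h1 : MeasurePreserving (MeasurableEquiv.finTwoArrow.symm : ℝ × ℝ ≃ᵐ _)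
        volume volume := (volume_preserving_finTwoArrow ℝ).symm
    have h2 := (EuclideanSpace.volume_preserving_symm_measurableEquiv_toLp (Fin 2)).symm
    have h3 := b.measurePreserving_measurableEquiv.symm
    exact (h3.comp h2).comp h1
  have hΦ_apply : ∀ p t : ℝ, Φ (p, t) = p • w + t • perp w := by
    intro p t
    show b.repr.symm ((MeasurableEquiv.toLp 2 (Fin 2 → ℝ))
      (MeasurableEquiv.finTwoArrow.symm (p, t))) = _
    rw [← b.sum_repr_symm]
    simp [Fin.sum_univ_two, hb, hv, MeasurableEquiv.finTwoArrow]
  -- the integrand on E2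
  set h : E2 → ℂ := fun x => Complex.exp (-(Complex.I * (⟪x, q • w⟫ : ℂ))) * f x with hdef
  have hint : Integrable h := by
    apply (f.integrable (μ := volume)).bdd_mul
      (c := 1)
    · apply Continuous.aestronglyMeasurable
      exact Complex.continuous_exp.comp
        (continuous_const.mul (Complex.continuous_ofReal.comp
          (Continuous.inner continuous_id continuous_const))).neg
    · filter_upwards with x
      rw [Complex.norm_exp]
      simp
  -- inner product along the slice
  have hinner : ∀ p t : ℝ, ⟪p • w + t • perp w, q • w⟫ = q * p := by
    intro p t
    rw [inner_add_left, real_inner_smul_left, real_inner_smul_left,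
      real_inner_smul_right, real_inner_smul_right, hww, hpw]
    ring
  -- main computation
  have key : ∀ p t : ℝ, Complex.exp (-(Complex.I * q * p)) * f (p • w + t • perp w)
      = h (Φ (p, t)) := by
    intro p t
    rw [hΦ_apply, hdef]
    simp only [hinner]
    push_cast
    ring_nf
  calc ∫ p : ℝ, Complex.exp (-(Complex.I * q * p)) * Radon (⇑f) w p
      = ∫ p : ℝ, ∫ t : ℝ, h (Φ (p, t)) := by
        simp_rw [Radon, ← MeasureTheory.integral_const_mul, key]
    _ = ∫ z : ℝ × ℝ, h (Φ z) := by
        have hI : Integrable (Function.uncurry fun p t : ℝ => h (Φ (p, t)))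
            ((volume : Measure ℝ).prod volume) :=
          (hΦ.integrable_comp_emb Φ.measurableEmbedding).mpr hint
        calc ∫ (p : ℝ) (t : ℝ), h (Φ (p, t))
            = ∫ z : ℝ × ℝ, h (Φ (z.1, z.2)) ∂((volume : Measure ℝ).prod volume) :=
              MeasureTheory.integral_integral hI
          _ = ∫ z : ℝ × ℝ, h (Φ z) := rfl
    _ = ∫ x : E2, h x := hΦ.integral_comp Φ.measurableEmbedding h
    _ = FT (⇑f) (q • w) := rfl
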